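/- arXiv:1801.06704 — 6 statements merged into one kernel-verified Lean document; each statement's English description precedes it below -/
import Mathlib

section
/- Let a, b be integers with a, b ≥ 2, and let ε > 0 be a real number. Then there exist positive integers m, n such that |a^m − b^n| ≤ ε · b^n. -/
theorem base_approximation (a b : ℕ) (ha : 2 ≤ a) (hb : 2 ≤ b) (ε : ℝ) (hε : 0 < ε) :
    ∃ m n : ℕ, 0 < m ∧ 0 < n ∧ |(a : ℝ) ^ m - (b : ℝ) ^ n| ≤ ε * (b : ℝ) ^ n := by
  have ha1 : (1:ℝ) < (a:ℝ) := by exact_mod_cast lt_of_lt_of_le one_lt_two ha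
  have hb1 : (1:ℝ) < (b:ℝ) := by exact_mod_cast lt_of_lt_of_le one_lt_two hb
  have hla : 0 < Real.log a := Real.log_pos ha1
  have hlb : 0 < Real.log b := Real.log_pos hb1
  have hlε : 0 < Real.log (1 + ε) := Real.log_pos (by linarith)
  set ξ : ℝ := Real.log a / Real.log b with hξdef
  have hξpos : 0 < ξ := div_pos hla hlb
  obtain ⟨N, hN⟩ := exists_nat_gt (max (1/ξ) (Real.log b / Real.log (1+ε)))
  have hNξ : 1 / ξ < N := lt_of_le_of_lt (le_max_left _ _) hN
  have hNε : Real.log b / Real.log (1+ε) < N := lt_of_le_of_lt (le_max_right _ _) hN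
  have hNpos : 0 < N := by
    have : (0:ℝ) < N := lt_trans (by positivity) hNξ
    exact_mod_cast this
  have hN1 : (0:ℝ) < (N:ℝ) + 1 := by positivity
  -- 1/(N+1) < ξ
  have hsmall : 1 / ((N:ℝ) + 1) < ξ := by
    rw [div_lt_iff₀ hN1]
    rw [div_lt_iff₀ hξpos] at hNξ
    nlinarith
  -- log b / (N+1) ≤ log(1+ε)
  have hδ : Real.log b / ((N:ℝ) + 1) ≤ Real.log (1+ε) := by
    rw [div_le_iff₀ hN1]
    rw [div_lt_iff₀ hlε] at hNε
    nlinarith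
  obtain ⟨j, k, hk0, hkN, hjk⟩ := Real.exists_int_int_abs_mul_sub_le ξ hNpos
  have hj0 : 0 < j := by
    by_contra h
    push_neg at h
    have hkξ : ξ ≤ (k:ℝ) * ξ := le_mul_of_one_le_left hξpos.le (by exact_mod_cast hk0)
    have : ξ ≤ (k:ℝ) * ξ - (j:ℝ) := by
      have : (j:ℝ) ≤ 0 := by exact_mod_cast h
      linarith
    have := le_trans this (le_abs_self _)
    linarith [le_trans this hjk]
  refine ⟨k.toNat, j.toNat, by omega, by omega, ?_⟩
  have hkc : ((k.toNat : ℕ) : ℝ) = (k:ℝ) := by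
    exact_mod_cast congrArg (Int.cast : ℤ → ℝ) (Int.toNat_of_nonneg hk0.le)
  have hjc : ((j.toNat : ℕ) : ℝ) = (j:ℝ) := by
    exact_mod_cast congrArg (Int.cast : ℤ → ℝ) (Int.toNat_of_nonneg hj0.le)
  set t : ℝ := (k:ℝ) * Real.log a - (j:ℝ) * Real.log b with htdef
  have ht : |t| ≤ Real.log (1+ε) := by
    have : t = ((k:ℝ) * ξ - (j:ℝ)) * Real.log b := by
      rw [htdef, hξdef, sub_mul, mul_assoc, div_mul_cancel₀ _ hlb.ne']
    rw [this, abs_mul, abs_of_pos hlb]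
    calc |(k:ℝ) * ξ - (j:ℝ)| * Real.log b ≤ (1/((N:ℝ)+1)) * Real.log b :=
          mul_le_mul_of_nonneg_right hjk hlb.le
      _ = Real.log b / ((N:ℝ)+1) := by ring
      _ ≤ Real.log (1+ε) := hδ
  have hεlog : Real.log (1+ε) ≤ ε := by
    have := Real.log_le_sub_one_of_pos (x := 1+ε) (by linarith)
    linarith
  have hapow : ((a:ℝ)) ^ k.toNat = Real.exp ((k:ℝ) * Real.log a) := by
    rw [← hkc, ← Real.rpow_natCast, Real.rpow_def_of_pos (by linarith : (0:ℝ) < (a:ℝ)), mul_comm]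
  have hbpow : ((b:ℝ)) ^ j.toNat = Real.exp ((j:ℝ) * Real.log b) := by
    rw [← hjc, ← Real.rpow_natCast, Real.rpow_def_of_pos (by linarith : (0:ℝ) < (b:ℝ)), mul_comm]
  have hbpos : 0 < Real.exp ((j:ℝ) * Real.log b) := Real.exp_pos _
  rw [hapow, hbpow]
  have hfact : Real.exp ((k:ℝ) * Real.log a) = Real.exp ((j:ℝ) * Real.log b) * Real.exp t := by
    rw [← Real.exp_add, htdef]; ring_nf
  rw [hfact]
  have key : |Real.exp t - 1| ≤ ε := by
    rw [abs_le]
    constructor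
    · have h1 : t + 1 ≤ Real.exp t := Real.add_one_le_exp t
      have h2 : -|t| ≤ t := neg_abs_le t
      linarith
    · have h1 : t ≤ Real.log (1+ε) := le_trans (le_abs_self t) ht
      have h2 : Real.exp t ≤ 1 + ε := by
        calc Real.exp t ≤ Real.exp (Real.log (1+ε)) := Real.exp_le_exp.mpr h1
          _ = 1 + ε := Real.exp_log (by linarith)
      linarith
  calc |Real.exp ((j:ℝ) * Real.log b) * Real.exp t - Real.exp ((j:ℝ) * Real.log b)|
      = Real.exp ((j:ℝ) * Real.log b) * |Real.exp t - 1| := by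
        rw [← mul_sub_one, abs_mul, abs_of_pos hbpos]
    _ ≤ Real.exp ((j:ℝ) * Real.log b) * ε := mul_le_mul_of_nonneg_left key hbpos.le
    _ = ε * Real.exp ((j:ℝ) * Real.log b) := by ring
end

section
/- Let f : ℕ → α be a sequence, p, q positive integers, and I, J ⊆ ℕ intervals. Suppose f has local period p on I (i.e., f(x) = f(x+p) whenever x, x+p ∈ I) and local period q on J. If the intersection I ∩ J contains at least p + q elements, then f has local period p on I ∪ J. -/
theorem overlapping_local_period {α : Type*} (f : ℕ → α) (p q : ℕ) (hp : 0 < p) (hq : 0 < q)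
    (I J : Set ℕ) (hI : I.OrdConnected) (hJ : J.OrdConnected)
    (hfI : ∀ x, x ∈ I → x + p ∈ I → f x = f (x + p))
    (hfJ : ∀ x, x ∈ J → x + q ∈ J → f x = f (x + q))
    (hcard : ∃ T : Finset ℕ, ↑T ⊆ I ∩ J ∧ p + q ≤ T.card) :
    ∀ x, x ∈ I ∪ J → x + p ∈ I ∪ J → f x = f (x + p) := by
  obtain ⟨T, hTsub, hTcard⟩ := hcard
  have hTne : T.Nonempty := Finset.card_pos.mp (by omega)
  set e := T.min' hTne with he
  set m := T.max' hTne with hm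
  have heIJ : e ∈ I ∩ J := hTsub (T.min'_mem hTne)
  have hmIJ : m ∈ I ∩ J := hTsub (T.max'_mem hTne)
  have hKI : ∀ y, e ≤ y → y ≤ m → y ∈ I := fun y h1 h2 => hI.out heIJ.1 hmIJ.1 ⟨h1, h2⟩
  have hKJ : ∀ y, e ≤ y → y ≤ m → y ∈ J := fun y h1 h2 => hJ.out heIJ.2 hmIJ.2 ⟨h1, h2⟩
  have hem : e + p + q ≤ m + 1 := by
    have hsub : T ⊆ Finset.Icc e m :=
      fun t ht => Finset.mem_Icc.mpr ⟨T.min'_le t ht, T.le_max' t ht⟩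
    have := Finset.card_le_card hsub
    rw [Nat.card_Icc] at this
    omega
  -- transport along q within J
  have haux : ∀ n x, x ∈ J → x + n * q ∈ J → f x = f (x + n * q) := by
    intro n
    induction n with
    | zero => simp
    | succ n ih =>
      intro x hx hxn
      have hle : n * q ≤ (n + 1) * q := Nat.mul_le_mul_right q (by omega)
      have h1 : x + n * q ∈ J := hJ.out hx hxn ⟨Nat.le_add_right _ _, by omega⟩
      have h2 : f x = f (x + n * q) := ih x hx h1
      have h3 : f (x + n * q) = f (x + n * q + q) :=
        hfJ _ h1 (by rw [show x + n * q + q = x + (n + 1) * q by ring]; exact hxn)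
      rw [h2, h3, show x + n * q + q = x + (n + 1) * q by ring]
  have haux2 : ∀ x y, x ∈ J → y ∈ J → x % q = y % q → f x = f y := by
    have key : ∀ x y, x ≤ y → x ∈ J → y ∈ J → x % q = y % q → f x = f y := by
      intro x y hxy hx hy hmod
      obtain ⟨n, hn⟩ : q ∣ y - x := (Nat.modEq_iff_dvd' hxy).mp hmod
      have hy2 : y = x + n * q := by
        rw [mul_comm, ← hn]; exact (Nat.add_sub_cancel' hxy).symm
      rw [hy2]; exact haux n x hx (hy2 ▸ hy)
    intro x y hx hy hmod
    rcases le_total x y with h | h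
    · exact key x y h hx hy hmod
    · exact (key y x h hy hx hmod.symm).symm
  -- f has period p on J as well
  have hpJ : ∀ x, x ∈ J → x + p ∈ J → f x = f (x + p) := by
    intro x hx hxp
    obtain ⟨x', hx'1, hx'2, hx'mod⟩ : ∃ x', e ≤ x' ∧ x' < e + q ∧ x' % q = x % q := by
      refine ⟨e + (x + q * e - e) % q, Nat.le_add_right _ _, ?_, ?_⟩
      · have := Nat.mod_lt (x + q * e - e) hq; omega
      · have hle : e ≤ q * e := Nat.le_mul_of_pos_left e hq
        have heq : e + (x + q * e - e) = x + q * e := by omega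
        calc (e + (x + q * e - e) % q) % q
            = (e + (x + q * e - e)) % q := by
              conv_lhs => rw [Nat.add_mod]
              conv_rhs => rw [Nat.add_mod]
              rw [Nat.mod_mod_of_dvd _ dvd_rfl]
          _ = x % q := by rw [heq, Nat.add_mul_mod_self_left]
    have hx'J : x' ∈ J := hKJ x' hx'1 (by omega)
    have hx'pJ : x' + p ∈ J := hKJ _ (by omega) (by omega)
    have h1 : f x = f x' := haux2 x x' hx hx'J hx'mod.symm
    have h2 : f (x + p) = f (x' + p) := haux2 _ _ hxp hx'pJ (by
      simp [Nat.add_mod, hx'mod])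
    have h3 : f x' = f (x' + p) := hfI x' (hKI x' hx'1 (by omega)) (hKI _ (by omega) (by omega))
    rw [h1, h3, ← h2]
  intro x hx hxp
  rcases hx with hxI | hxJ
  · rcases hxp with hpI | hpJ'
    · exact hfI x hxI hpI
    · by_cases hxJ : x ∈ J
      · exact hpJ x hxJ hpJ'
      · have hxe : x < e := by
          by_contra h
          exact hxJ (hJ.out heIJ.2 hpJ' ⟨by omega, Nat.le_add_right _ _⟩)
        have : x + p ∈ I := hI.out hxI hmIJ.1 ⟨Nat.le_add_right _ _, by omega⟩
        exact hfI x hxI this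
  · rcases hxp with hpI | hpJ'
    · by_cases hxI : x ∈ I
      · exact hfI x hxI hpI
      · have hxe : x < e := by
          by_contra h
          exact hxI (hI.out heIJ.1 hpI ⟨by omega, Nat.le_add_right _ _⟩)
        have : x + p ∈ J := hJ.out hxJ hmIJ.2 ⟨Nat.le_add_right _ _, by omega⟩
        exact hpJ x hxJ this
    · exact hpJ x hxJ hpJ'
end

section
/- Let a, b ≥ 2 be multiplicatively independent integers (a^m ≠ b^n for all positive integers m, n). Then for every real ε > 0 there exist positive integers m, n with 0 < |a^m − b^n| ≤ ε · b^n. -/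
theorem base_approximation_nonzero (a b : ℕ) (ha : 2 ≤ a) (hb : 2 ≤ b)
    (hindep : ∀ m n : ℕ, 0 < m → 0 < n → a ^ m ≠ b ^ n)
    (ε : ℝ) (hε : 0 < ε) :
    ∃ m n : ℕ, 0 < m ∧ 0 < n ∧ 0 < |(a : ℝ) ^ m - (b : ℝ) ^ n| ∧
      |(a : ℝ) ^ m - (b : ℝ) ^ n| ≤ ε * (b : ℝ) ^ n := by
  have ha1 : (1 : ℝ) < (a : ℝ) := by exact_mod_cast lt_of_lt_of_le one_lt_two (by exact_mod_cast ha)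
  have hb1 : (1 : ℝ) < (b : ℝ) := by exact_mod_cast lt_of_lt_of_le one_lt_two (by exact_mod_cast hb)
  have hLa : 0 < Real.log a := Real.log_pos ha1
  have hLb : 0 < Real.log b := Real.log_pos hb1
  set θ : ℝ := Real.log a / Real.log b with hθdef
  have hθpos : 0 < θ := div_pos hLa hLb
  set δ : ℝ := min (θ / 2) (Real.log (1 + ε) / Real.log b) with hδdef
  have hδpos : 0 < δ := lt_min (by linarith) (div_pos (Real.log_pos (by linarith)) hLb)
  obtain ⟨N, hN⟩ := exists_nat_gt (1 / δ)
  have hNpos : 0 < N + 1 := Nat.succ_pos N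
  obtain ⟨j, k, hk0, hkN, habs⟩ := Real.exists_int_int_abs_mul_sub_le θ hNpos
  have hδbound : |(k : ℝ) * θ - j| ≤ δ := by
    refine habs.trans ?_
    rw [div_le_iff₀ (by positivity)]
    rw [div_lt_iff₀ hδpos] at hN
    push_cast
    nlinarith [hδpos.le]
  -- j is positive
  have hk1 : (1 : ℝ) ≤ (k : ℝ) := by exact_mod_cast hk0
  have hjpos : 0 < j := by
    by_contra hj
    push_neg at hj
    have hj0 : (j : ℝ) ≤ 0 := by exact_mod_cast hj
    have : (k : ℝ) * θ - j ≥ θ := by nlinarith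
    have hδθ : δ ≤ θ / 2 := min_le_left _ _
    have := le_abs_self ((k : ℝ) * θ - j)
    linarith [hδbound, abs_nonneg ((k:ℝ)*θ - j)]
  refine ⟨k.toNat, j.toNat, by omega, by omega, ?_, ?_⟩
  · -- nonzero
    rw [abs_pos, sub_ne_zero]
    intro h
    have : a ^ k.toNat = b ^ j.toNat := by
      have := h
      push_cast at this
      exact_mod_cast this
    exact hindep k.toNat j.toNat (by omega) (by omega) this
  · -- the bound
    have hkc : ((k.toNat : ℕ) : ℝ) = (k : ℝ) := by
      exact_mod_cast Int.toNat_of_nonneg hk0.le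
    have hjc : ((j.toNat : ℕ) : ℝ) = (j : ℝ) := by
      exact_mod_cast Int.toNat_of_nonneg hjpos.le
    set t : ℝ := (k.toNat : ℝ) * Real.log a - (j.toNat : ℝ) * Real.log b with htdef
    have ht : |t| ≤ δ * Real.log b := by
      have : t = ((k : ℝ) * θ - j) * Real.log b := by
        rw [htdef, hkc, hjc, hθdef]; field_simp
      rw [this, abs_mul, abs_of_pos hLb]
      exact mul_le_mul_of_nonneg_right hδbound hLb.le
    have hApos : (0:ℝ) < (a : ℝ) ^ k.toNat := by positivity
    have hBpos : (0:ℝ) < (b : ℝ) ^ j.toNat := by positivity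
    have hA : (a : ℝ) ^ k.toNat = Real.exp ((k.toNat : ℝ) * Real.log a) := by
      rw [Real.exp_nat_mul, Real.exp_log (by linarith)]
    have hB : (b : ℝ) ^ j.toNat = Real.exp ((j.toNat : ℝ) * Real.log b) := by
      rw [Real.exp_nat_mul, Real.exp_log (by linarith)]
    have key : |(a:ℝ) ^ k.toNat - (b:ℝ) ^ j.toNat| = (b:ℝ) ^ j.toNat * |Real.exp t - 1| := by
      have h3 : (a:ℝ) ^ k.toNat = (b:ℝ) ^ j.toNat * Real.exp t := by
        rw [hA, hB, ← Real.exp_add]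
        congr 1
        rw [htdef]; ring
      rw [h3, show (b:ℝ) ^ j.toNat * Real.exp t - (b:ℝ) ^ j.toNat
            = (b:ℝ) ^ j.toNat * (Real.exp t - 1) by ring, abs_mul, abs_of_pos hBpos]
    rw [key, mul_comm (ε) _]
    refine mul_le_mul_of_nonneg_left ?_ hBpos.le
    -- |exp t - 1| ≤ exp |t| - 1 ≤ (1+ε) - 1 = ε
    have h1 : |Real.exp t - 1| ≤ Real.exp |t| - 1 := by
      rcases abs_cases t with ⟨he, h0⟩ | ⟨he, h0⟩
      · rw [he, abs_of_nonneg (by linarith [Real.one_le_exp h0])]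
      · rw [he, abs_of_nonpos (by linarith [Real.exp_le_one_iff.mpr h0.le] : Real.exp t - 1 ≤ 0)]
        have e1 := Real.add_one_le_exp t
        have e2 := Real.add_one_le_exp (-t)
        nlinarith [Real.exp_pos t, Real.exp_pos (-t)]
    have h2 : Real.exp |t| ≤ 1 + ε := by
      have : |t| ≤ Real.log (1 + ε) := by
        have hδ2 : δ ≤ Real.log (1 + ε) / Real.log b := min_le_right _ _
        calc |t| ≤ δ * Real.log b := ht
          _ ≤ (Real.log (1 + ε) / Real.log b) * Real.log b :=
              mul_le_mul_of_nonneg_right hδ2 hLb.le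
          _ = Real.log (1 + ε) := by field_simp
      calc Real.exp |t| ≤ Real.exp (Real.log (1 + ε)) := Real.exp_le_exp.mpr this
        _ = 1 + ε := Real.exp_log (by linarith)
    linarith
end

section
/- Let f : ℕ → α and suppose there exist x ∈ ℕ, a positive integer n, and for each y ≥ x a positive integer p_y ≤ b^n/6 (for a fixed integer b ≥ 2) such that f has local period p_y on the interval I_y = {z ∈ ℕ : |z − (y·b^n + b^n)| ≤ (2/3)·b^n}. Then f has local period p_x on the union ⋃_{y ≥ x} I_y; in particular, f is ultimately periodic. -/
private lemma steps_aux {α : Type*} (f : ℕ → α) (q a : ℕ) :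
    ∀ m : ℕ, (∀ k, k < m → f (a + k * q) = f (a + k * q + q)) → f a = f (a + m * q) := by
  intro m
  induction m with
  | zero => simp
  | succ m ih =>
    intro h
    have h1 := ih (fun k hk => h k (hk.trans (Nat.lt_succ_self m)))
    have h2 := h m (Nat.lt_succ_self m)
    rw [h1, h2, show a + m * q + q = a + (m + 1) * q by ring]

set_option maxHeartbeats 1000000 in
private lemma glue_aux {α : Type*} (f : ℕ → α) (c : ℝ) (hc2 : (2:ℝ) ≤ c)
    (x : ℕ) (p : ℕ → ℕ)
    (hppos : ∀ y, x ≤ y → 0 < p y)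
    (hpsmall : ∀ y, x ≤ y → (p y : ℝ) ≤ c / 6)
    (hloc : ∀ y, x ≤ y → ∀ z : ℕ,
      |(z : ℝ) - ((y : ℝ) * c + c)| ≤ 2 / 3 * c →
      |((z + p y : ℕ) : ℝ) - ((y : ℝ) * c + c)| ≤ 2 / 3 * c →
      f z = f (z + p y)) :
    ∀ z : ℕ, ((x:ℝ)+1) * c - 2/3 * c ≤ z → f z = f (z + p x) := by
  have hc0 : (0:ℝ) < c := by linarith
  have Q : ∀ y : ℕ, x ≤ y → ∀ z : ℕ, ((x:ℝ)+1) * c - 2/3 * c ≤ z →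
      (z:ℝ) < ((y:ℝ)+2) * c - 2/3 * c → f z = f (z + p x) := by
    intro y hy
    induction y, hy using Nat.le_induction with
    | base =>
      intro z hz1 hz2
      have hpx6 : (p x : ℝ) ≤ c / 6 := hpsmall x le_rfl
      have hpx0' : (0:ℝ) ≤ (p x : ℝ) := Nat.cast_nonneg _
      apply hloc x le_rfl z
      · rw [abs_le]; constructor <;> linarith
      · rw [abs_le]; push_cast; constructor <;> linarith
    | succ y hy IH =>
      intro z hz1 hz2
      by_cases hcase : (z:ℝ) < ((y:ℝ)+2) * c - 2/3 * c
      · exact IH z hz1 hcase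
      push_neg at hcase
      have hyx : (x:ℝ) ≤ (y:ℝ) := Nat.cast_le.mpr hy
      have hxc : (x:ℝ)*c ≤ (y:ℝ)*c := mul_le_mul_of_nonneg_right hyx hc0.le
      have hy0c : 0 ≤ (y:ℝ)*c := mul_nonneg (Nat.cast_nonneg y) hc0.le
      have hzLc : (z:ℝ) < ((y:ℝ)+2) * c - 2/3 * c + c := by push_cast at hz2; linarith
      have hpx6 : (p x : ℝ) ≤ c / 6 := hpsmall x le_rfl
      have hpx0' : (0:ℝ) ≤ (p x : ℝ) := Nat.cast_nonneg _
      have hq0 : 0 < p (y+1) := hppos (y+1) (by omega)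
      have hq6 : (p (y+1) : ℝ) ≤ c / 6 := hpsmall (y+1) (by omega)
      have hq0' : (1:ℝ) ≤ (p (y+1) : ℝ) := by exact_mod_cast hq0
      have hpy0 : 0 < p y := hppos y hy
      have hpy6 : (p y : ℝ) ≤ c / 6 := hpsmall y hy
      have hpy0' : (1:ℝ) ≤ (p y : ℝ) := by exact_mod_cast hpy0
      -- the two local-period step lemmas
      have hstep1 : ∀ w : ℕ, ((y:ℝ)+2) * c - 2/3 * c ≤ (w:ℝ) →
          (w:ℝ) + (p (y+1):ℝ) ≤ ((y:ℝ)+2)*c + 2/3*c → f w = f (w + p (y+1)) := by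
        intro w hw1 hw2
        apply hloc (y+1) (by omega) w
        · rw [abs_le]; push_cast; constructor <;> linarith
        · rw [abs_le]; push_cast; constructor <;> linarith
      have hstep0 : ∀ w : ℕ, ((y:ℝ)+1)*c - 2/3*c ≤ (w:ℝ) →
          (w:ℝ) + (p y:ℝ) ≤ ((y:ℝ)+1)*c + 2/3*c → f w = f (w + p y) := by
        intro w hw1 hw2
        apply hloc y hy w
        · rw [abs_le]; push_cast; constructor <;> linarith
        · rw [abs_le]; push_cast; constructor <;> linarith
      -- ceiling point
      have htL : ((y:ℝ)+2)*c - 2/3*c ≤ (⌈((y:ℝ)+2)*c - 2/3*c⌉₊ : ℝ) := Nat.le_ceil _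
      have htL1 : ((⌈((y:ℝ)+2)*c - 2/3*c⌉₊ : ℕ) : ℝ) < ((y:ℝ)+2)*c - 2/3*c + 1 :=
        Nat.ceil_lt_add_one (by linarith)
      have htz : (⌈((y:ℝ)+2)*c - 2/3*c⌉₊ : ℕ) ≤ z := Nat.ceil_le.mpr hcase
      obtain ⟨t, htdef⟩ : ∃ t : ℕ, t = ⌈((y:ℝ)+2)*c - 2/3*c⌉₊ := ⟨_, rfl⟩
      rw [← htdef] at htL htL1 htz
      -- phase 1 : reduce z modulo p (y+1) down to z1 ∈ [t, t + p (y+1))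
      obtain ⟨r, hrdef⟩ : ∃ r : ℕ, r = (z - t) % p (y+1) := ⟨_, rfl⟩
      obtain ⟨m, hmdef⟩ : ∃ m : ℕ, m = (z - t) / p (y+1) := ⟨_, rfl⟩
      obtain ⟨z1, hz1def⟩ : ∃ z1 : ℕ, z1 = t + r := ⟨_, rfl⟩
      have hrq : r < p (y+1) := by rw [hrdef]; exact Nat.mod_lt _ hq0
      have hz1eq : z1 + m * p (y+1) = z := by
        rw [hz1def, hrdef, hmdef]
        have h := Nat.mod_add_div' (z - t) (p (y+1))
        omega
      have hz1ge : t ≤ z1 := by omega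
      have hz1L : ((y:ℝ)+2)*c - 2/3*c ≤ (z1:ℝ) := by
        have : (t:ℝ) ≤ (z1:ℝ) := Nat.cast_le.mpr hz1ge
        linarith
      have hz1lt : (z1:ℝ) < ((y:ℝ)+2)*c - 2/3*c + (p (y+1):ℝ) := by
        have hr1 : (r:ℝ) + 1 ≤ (p (y+1):ℝ) := by exact_mod_cast hrq
        have : (z1:ℝ) = (t:ℝ) + (r:ℝ) := by rw [hz1def]; push_cast; ring
        linarith
      have e1 : f z1 = f z := by
        have hs := steps_aux f (p (y+1)) z1 m (fun k hk => ?_)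
        · rw [hs, hz1eq]
        · apply hstep1
          · have : (z1:ℝ) ≤ ((z1 + k * p (y+1) : ℕ):ℝ) := Nat.cast_le.mpr (Nat.le_add_right _ _)
            linarith
          · have hnat : z1 + k * p (y+1) + p (y+1) ≤ z := by
              have h1 : (k+1) * p (y+1) ≤ m * p (y+1) := Nat.mul_le_mul_right _ hk
              have h2 : (k+1) * p (y+1) = k * p (y+1) + p (y+1) := by ring
              omega
            have : ((z1 + k * p (y+1) : ℕ):ℝ) + (p (y+1):ℝ) ≤ (z:ℝ) := by
              push_cast; push_cast at hnat; exact_mod_cast hnat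
            linarith
      have e1' : f (z1 + p x) = f (z + p x) := by
        have hadd : (z1 + p x) + m * p (y+1) = z + p x := by omega
        have hs := steps_aux f (p (y+1)) (z1 + p x) m (fun k hk => ?_)
        · rw [hs, hadd]
        · apply hstep1
          · have : (z1:ℝ) ≤ ((z1 + p x + k * p (y+1) : ℕ):ℝ) :=
              Nat.cast_le.mpr (by omega)
            linarith
          · have hnat : z1 + p x + k * p (y+1) + p (y+1) ≤ z + p x := by
              have h1 : (k+1) * p (y+1) ≤ m * p (y+1) := Nat.mul_le_mul_right _ hk
              have h2 : (k+1) * p (y+1) = k * p (y+1) + p (y+1) := by ring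
              omega
            have hR : ((z1 + p x + k * p (y+1) : ℕ):ℝ) + (p (y+1):ℝ) ≤ (z:ℝ) + (p x:ℝ) := by
              have := (Nat.cast_le (α := ℝ)).mpr hnat
              push_cast at this ⊢; linarith
            linarith
      -- phase 2 : reduce z1 modulo p y down below t
      have hpyt : p y ≤ t := by
        have : (p y : ℝ) ≤ (t:ℝ) := by linarith
        exact_mod_cast this
      obtain ⟨u, hudef⟩ : ∃ u : ℕ, u = t - p y := ⟨_, rfl⟩
      obtain ⟨r2, hr2def⟩ : ∃ r2 : ℕ, r2 = (z1 - u) % p y := ⟨_, rfl⟩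
      obtain ⟨m2, hm2def⟩ : ∃ m2 : ℕ, m2 = (z1 - u) / p y := ⟨_, rfl⟩
      obtain ⟨z2, hz2def⟩ : ∃ z2 : ℕ, z2 = u + r2 := ⟨_, rfl⟩
      have hr2 : r2 < p y := by rw [hr2def]; exact Nat.mod_lt _ hpy0
      have hz2eq : z2 + m2 * p y = z1 := by
        rw [hz2def, hr2def, hm2def]
        have h := Nat.mod_add_div' (z1 - u) (p y)
        have huz1 : u ≤ z1 := by omega
        omega
      have hu_real : (u:ℝ) = (t:ℝ) - (p y:ℝ) := by
        rw [hudef]; push_cast [hpyt]; ring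
      have hz2lo : ((y:ℝ)+2)*c - 2/3*c - (p y:ℝ) ≤ (z2:ℝ) := by
        have : (u:ℝ) ≤ (z2:ℝ) := Nat.cast_le.mpr (by omega)
        linarith
      have hz2lt : (z2:ℝ) < ((y:ℝ)+2)*c - 2/3*c := by
        have hz2t : z2 + 1 ≤ t := by omega
        have : (z2:ℝ) + 1 ≤ (t:ℝ) := by exact_mod_cast hz2t
        linarith
      have e2 : f z2 = f z1 := by
        have hs := steps_aux f (p y) z2 m2 (fun k hk => ?_)
        · rw [hs, hz2eq]
        · apply hstep0
          · have : (z2:ℝ) ≤ ((z2 + k * p y : ℕ):ℝ) := Nat.cast_le.mpr (Nat.le_add_right _ _)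
            linarith
          · have hnat : z2 + k * p y + p y ≤ z1 := by
              have h1 : (k+1) * p y ≤ m2 * p y := Nat.mul_le_mul_right _ hk
              have h2 : (k+1) * p y = k * p y + p y := by ring
              omega
            have : ((z2 + k * p y : ℕ):ℝ) + (p y:ℝ) ≤ (z1:ℝ) := by exact_mod_cast hnat
            linarith
      have e2' : f (z2 + p x) = f (z1 + p x) := by
        have hadd : (z2 + p x) + m2 * p y = z1 + p x := by omega
        have hs := steps_aux f (p y) (z2 + p x) m2 (fun k hk => ?_)
        · rw [hs, hadd]
        · apply hstep0
          · have : (z2:ℝ) ≤ ((z2 + p x + k * p y : ℕ):ℝ) := Nat.cast_le.mpr (by omega)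
            linarith
          · have hnat : z2 + p x + k * p y + p y ≤ z1 + p x := by
              have h1 : (k+1) * p y ≤ m2 * p y := Nat.mul_le_mul_right _ hk
              have h2 : (k+1) * p y = k * p y + p y := by ring
              omega
            have hR : ((z2 + p x + k * p y : ℕ):ℝ) + (p y:ℝ) ≤ (z1:ℝ) + (p x:ℝ) := by
              have := (Nat.cast_le (α := ℝ)).mpr hnat
              push_cast at this ⊢; linarith
            linarith
      have e3 : f z2 = f (z2 + p x) := by
        apply IH z2
        · linarith
        · linarith
      calc f z = f z1 := e1.symm
      _ = f z2 := e2.symm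
      _ = f (z2 + p x) := e3
      _ = f (z1 + p x) := e2'
      _ = f (z + p x) := e1'
  intro z hz
  have hex : ∃ y : ℕ, x ≤ y ∧ (z:ℝ) < ((y:ℝ)+2) * c - 2/3 * c := by
    refine ⟨x + z, Nat.le_add_right _ _, ?_⟩
    push_cast
    have h1 : (0:ℝ) ≤ (x:ℝ) := Nat.cast_nonneg x
    have h2 : (0:ℝ) ≤ (z:ℝ) := Nat.cast_nonneg z
    nlinarith
  obtain ⟨y, hy1, hy2⟩ := hex
  exact Q y hy1 z hz hy2

theorem glue_local_periods_ultimately_periodic {α : Type*} (f : ℕ → α)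
    (b : ℕ) (hb : 2 ≤ b) (n : ℕ) (hn : 1 ≤ n) (x : ℕ) (p : ℕ → ℕ)
    (hppos : ∀ y, x ≤ y → 0 < p y)
    (hpsmall : ∀ y, x ≤ y → (p y : ℝ) ≤ (b : ℝ) ^ n / 6)
    (hloc : ∀ y, x ≤ y → ∀ z : ℕ,
      |(z : ℝ) - ((y : ℝ) * (b : ℝ) ^ n + (b : ℝ) ^ n)| ≤ 2 / 3 * (b : ℝ) ^ n →
      |((z + p y : ℕ) : ℝ) - ((y : ℝ) * (b : ℝ) ^ n + (b : ℝ) ^ n)| ≤ 2 / 3 * (b : ℝ) ^ n →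
      f z = f (z + p y)) :
    (∀ z : ℕ,
      (z ∈ ⋃ y ∈ Set.Ici x, {w : ℕ | |(w : ℝ) - ((y : ℝ) * (b : ℝ) ^ n + (b : ℝ) ^ n)| ≤ 2 / 3 * (b : ℝ) ^ n}) →
      (z + p x ∈ ⋃ y ∈ Set.Ici x, {w : ℕ | |(w : ℝ) - ((y : ℝ) * (b : ℝ) ^ n + (b : ℝ) ^ n)| ≤ 2 / 3 * (b : ℝ) ^ n}) →
      f z = f (z + p x)) ∧
    ∃ N : ℕ, ∃ P : ℕ, 0 < P ∧ ∀ z, N ≤ z → f z = f (z + P) := by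
  have hc2 : (2:ℝ) ≤ (b:ℝ)^n := by
    calc (2:ℝ) = 2^1 := by norm_num
    _ ≤ (2:ℝ)^n := by apply pow_le_pow_right₀ (by norm_num) hn
    _ ≤ (b:ℝ)^n := by
        apply pow_le_pow_left₀ (by norm_num)
        exact_mod_cast hb
  have hc0 : (0:ℝ) < (b:ℝ)^n := by linarith
  have key := glue_aux f ((b:ℝ)^n) hc2 x p hppos hpsmall hloc
  have hpx0 : 0 < p x := hppos x le_rfl
  constructor
  · intro z hz _
    simp only [Set.mem_iUnion, Set.mem_Ici, Set.mem_setOf_eq] at hz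
    obtain ⟨y, hy, hzy⟩ := hz
    apply key
    rw [abs_le] at hzy
    have hyx : (x:ℝ) ≤ (y:ℝ) := Nat.cast_le.mpr hy
    have hxc : (x:ℝ)*(b:ℝ)^n ≤ (y:ℝ)*(b:ℝ)^n := mul_le_mul_of_nonneg_right hyx hc0.le
    linarith [hzy.1]
  · refine ⟨⌈((x:ℝ)+1)*(b:ℝ)^n⌉₊, p x, hpx0, fun z hz => ?_⟩
    apply key
    have h1 : ((x:ℝ)+1)*(b:ℝ)^n ≤ (⌈((x:ℝ)+1)*(b:ℝ)^n⌉₊ : ℝ) := Nat.le_ceil _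
    have h2 : ((⌈((x:ℝ)+1)*(b:ℝ)^n⌉₊ : ℕ):ℝ) ≤ (z:ℝ) := Nat.cast_le.mpr hz
    linarith
end

section
/- Let b ≥ 2 and let D be any finite set of natural numbers containing {0, 1, ..., b−1}. A sequence f : ℕ → α is b-automatic (with digit alphabet {0,...,b−1}) if and only if there is a DFAO over alphabet D such that f(⟦w⟧_b) = F(δ(s₀, w)) for all words w ∈ D^*. -/
/-- Base-`b` value of a word, most significant digit first. -/
def wordVal (b : ℕ) (w : List ℕ) : ℕ := w.foldl (fun acc d => acc * b + d) 0

lemma wordVal_foldl (b : ℕ) (w : List ℕ) (a : ℕ) :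
    w.foldl (fun acc d => acc * b + d) a = a * b ^ w.length + wordVal b w := by
  induction w generalizing a with
  | nil => simp [wordVal]
  | cons d w ih =>
    have h2 : wordVal b (d :: w) = d * b ^ w.length + wordVal b w := by
      show List.foldl (fun acc d => acc * b + d) 0 (d :: w) = _
      rw [List.foldl_cons, ih]
      ring
    simp only [List.foldl_cons, List.length_cons, ih, h2]
    ring

lemma wordVal_reverse_ofDigits (b : ℕ) (l : List ℕ) :
    wordVal b l.reverse = Nat.ofDigits b l := by
  induction l with
  | nil => simp [wordVal, Nat.ofDigits_nil]
  | cons d l ih =>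
    have : wordVal b (l.reverse ++ [d]) = wordVal b l.reverse * b + d := by
      simp [wordVal, List.foldl_append]
    simp [Nat.ofDigits_cons, this, ih]
    ring

lemma wordVal_digits (b n : ℕ) : wordVal b ((Nat.digits b n).reverse) = n := by
  rw [wordVal_reverse_ofDigits]
  exact_mod_cast Nat.ofDigits_digits b n

theorem automatic_iff_digit_set_automatic {α : Type*} (b : ℕ) (hb : 2 ≤ b)
    (D : Finset ℕ) (hD : ∀ d, d < b → d ∈ D) (f : ℕ → α) :
    (∃ (S : Type) (_ : Fintype S) (δ : S → ℕ → S) (s₀ : S) (F : S → α),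
      ∀ w : List ℕ, (∀ d ∈ w, d < b) → f (wordVal b w) = F (w.foldl δ s₀)) ↔
    (∃ (S : Type) (_ : Fintype S) (δ : S → ℕ → S) (s₀ : S) (F : S → α),
      ∀ w : List ℕ, (∀ d ∈ w, d ∈ D) → f (wordVal b w) = F (w.foldl δ s₀)) := by
  have b_pos : 0 < b := by omega
  constructor
  · rintro ⟨S, fS, δ, s₀, F, h⟩
    haveI := fS
    -- Step 1: make a zero-absorbing automaton on Option S.
    set δ₁ : Option S → ℕ → Option S := fun s d =>
      match s with
      | none => if d = 0 then none else some (δ s₀ d)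
      | some s => some (δ s d) with hδ₁
    set F₁ : Option S → α := fun s =>
      match s with
      | none => f 0
      | some s => F s with hF₁
    have hfold_some : ∀ (w : List ℕ) (s : S),
        w.foldl δ₁ (some s) = some (w.foldl δ s) := by
      intro w
      induction w with
      | nil => intro s; rfl
      | cons d w ih => intro s; simp only [List.foldl_cons]; exact ih (δ s d)
    have h₁ : ∀ w : List ℕ, (∀ d ∈ w, d < b) →
        f (wordVal b w) = F₁ (w.foldl δ₁ none) := by
      intro w
      induction w with
      | nil => intro _; simp [wordVal, hF₁]
      | cons d w ih =>
        intro hw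
        by_cases hd : d = 0
        · subst hd
          have : wordVal b (0 :: w) = wordVal b w := by simp [wordVal]
          rw [this]
          simp only [List.foldl_cons]
          have : δ₁ none 0 = none := by simp [hδ₁]
          rw [this]
          exact ih (fun e he => hw e (List.mem_cons_of_mem _ he))
        · rw [h (d :: w) hw]
          simp only [List.foldl_cons]
          have h1 : δ₁ none d = some (δ s₀ d) := by simp [hδ₁, hd]
          rw [h1, hfold_some]
    -- Step 2: the state reached by the canonical representation.
    set σ : ℕ → Option S := fun u => ((Nat.digits b u).reverse).foldl δ₁ none with hσ
    have hσf : ∀ n, f n = F₁ (σ n) := by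
      intro n
      have hd : ∀ d ∈ (Nat.digits b n).reverse, d < b := by
        intro d hdm
        exact Nat.digits_lt_base hb (List.mem_reverse.mp hdm)
      have := h₁ ((Nat.digits b n).reverse) hd
      rwa [wordVal_digits] at this
    have hσstep : ∀ u r, r < b → σ (u * b + r) = δ₁ (σ u) r := by
      intro u r hr
      by_cases hu : u * b + r = 0
      · have hub : u * b = 0 := by omega
        have hu0 : u = 0 := by
          rcases Nat.mul_eq_zero.mp hub with h' | h'
          · exact h'
          · omega
        have hr0 : r = 0 := by omega
        subst hu0; subst hr0
        simp [hσ, hδ₁]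
      · have h1 : (u * b + r) % b = r := by
          rw [mul_comm u b, Nat.mul_add_mod, Nat.mod_eq_of_lt hr]
        have h2 : (u * b + r) / b = u := by
          rw [mul_comm u b, Nat.mul_add_div b_pos, Nat.div_eq_of_lt hr, add_zero]
        have hdig : Nat.digits b (u * b + r) = r :: Nat.digits b u := by
          rw [Nat.digits_def' (by omega : 1 < b) (Nat.pos_of_ne_zero hu), h1, h2]
        show List.foldl δ₁ none (Nat.digits b (u * b + r)).reverse =
          δ₁ (List.foldl δ₁ none (Nat.digits b u).reverse) r
        rw [hdig]
        simp only [List.reverse_cons, List.foldl_append, List.foldl_cons, List.foldl_nil]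
    -- Step 3: the automaton over D, with states (Fin K → Option S).
    set K : ℕ := D.sup id + 1 with hK
    have hK0 : 0 < K := Nat.succ_pos _
    have hdK : ∀ d ∈ D, d < K := by
      intro d hd
      have : id d ≤ D.sup id := Finset.le_sup hd
      simp only [id] at this; omega
    set δ₂ : (Fin K → Option S) → ℕ → (Fin K → Option S) := fun t d i =>
      δ₁ (t ⟨(d + i.val) / b % K, Nat.mod_lt _ hK0⟩) ((d + i.val) % b) with hδ₂
    refine ⟨Fin K → Option S, inferInstance, δ₂, (fun i => σ (0 + i.val)),
      (fun t => F₁ (t ⟨0, hK0⟩)), ?_⟩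
    have key : ∀ w : List ℕ, (∀ d ∈ w, d ∈ D) → ∀ v : ℕ,
        w.foldl δ₂ (fun i => σ (v + i.val)) =
          fun i => σ (w.foldl (fun acc d => acc * b + d) v + i.val) := by
      intro w
      induction w with
      | nil => intro _ v; rfl
      | cons d w ih =>
        intro hw v
        have hdK' : d < K := hdK d (hw d List.mem_cons_self)
        have hstep : δ₂ (fun i => σ (v + i.val)) d =
            fun i => σ (v * b + d + i.val) := by
          funext i
          have hib : d + i.val < K * b := by
            have h2K : K * 2 ≤ K * b := Nat.mul_le_mul_left K hb
            have : i.val < K := i.isLt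
            omega
          have hq : (d + i.val) / b < K := (Nat.div_lt_iff_lt_mul b_pos).mpr hib
          have hmod : (d + i.val) / b % K = (d + i.val) / b := Nat.mod_eq_of_lt hq
          have hr : (d + i.val) % b < b := Nat.mod_lt _ b_pos
          have harith : (v + (d + i.val) / b) * b + (d + i.val) % b
              = v * b + d + i.val := by
            have hdm := Nat.div_add_mod (d + i.val) b
            rw [add_mul, Nat.mul_comm ((d + i.val) / b) b]
            omega
          calc δ₂ (fun i => σ (v + i.val)) d i
              = δ₁ (σ (v + (d + i.val) / b)) ((d + i.val) % b) := by
                simp only [hδ₂, hmod]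
            _ = σ ((v + (d + i.val) / b) * b + (d + i.val) % b) :=
                (hσstep _ _ hr).symm
            _ = σ (v * b + d + i.val) := by rw [harith]
        simp only [List.foldl_cons, hstep]
        exact ih (fun e he => hw e (List.mem_cons_of_mem _ he)) (v * b + d)
    intro w hw
    have h2 := key w hw 0
    have : f (wordVal b w) = F₁ (σ (wordVal b w)) := hσf _
    rw [this, h2]
    simp [wordVal]
  · rintro ⟨S, fS, δ, s₀, F, h⟩
    exact ⟨S, fS, δ, s₀, F, fun w hw => h w (fun d hd => hD d (hw d hd))⟩
end

section
/- Let a, b ≥ 2 be multiplicatively independent integers and let ξ ≥ 1 be a natural number. Then there exist positive integers m, n such that 0 < ξ·|a^m − b^n| ≤ b^n/6 and (5/6)·b^n ≤ a^m ≤ (7/6)·b^n. -/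
set_option maxHeartbeats 1000000 in
theorem quantitative_approximation (a b : ℕ) (ha : 2 ≤ a) (hb : 2 ≤ b)
    (hindep : ∀ m n : ℕ, 0 < m → 0 < n → a ^ m ≠ b ^ n)
    (ξ : ℕ) (hξ : 1 ≤ ξ) :
    ∃ m n : ℕ, 0 < m ∧ 0 < n ∧
      0 < (ξ : ℝ) * |(a : ℝ) ^ m - (b : ℝ) ^ n| ∧
      (ξ : ℝ) * |(a : ℝ) ^ m - (b : ℝ) ^ n| ≤ (b : ℝ) ^ n / 6 ∧
      5 / 6 * (b : ℝ) ^ n ≤ (a : ℝ) ^ m ∧ (a : ℝ) ^ m ≤ 7 / 6 * (b : ℝ) ^ n := by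
  have ha1 : (1:ℝ) < a := by exact_mod_cast lt_of_lt_of_le one_lt_two (by exact_mod_cast ha)
  have hb1 : (1:ℝ) < b := by exact_mod_cast lt_of_lt_of_le one_lt_two (by exact_mod_cast hb)
  have ha0 : (0:ℝ) < a := by linarith
  have hb0 : (0:ℝ) < b := by linarith
  set la := Real.log a with hla_def
  set lb := Real.log b with hlb_def
  have hla : 0 < la := Real.log_pos ha1
  have hlb : 0 < lb := Real.log_pos hb1
  set α := la / lb with hαdef
  have hα : 0 < α := div_pos hla hlb
  have hba : (b:ℝ) ^ (α:ℝ) = a := by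
    rw [Real.rpow_def_of_pos hb0, hαdef, ← hlb_def, mul_div_cancel₀ _ (ne_of_gt hlb),
      hla_def, Real.exp_log ha0]
  have apow : ∀ m : ℕ, (a:ℝ) ^ m = (b:ℝ) ^ ((m:ℝ) * α) := by
    intro m
    rw [← hba, ← Real.rpow_natCast ((b:ℝ) ^ (α:ℝ)) m, ← Real.rpow_mul hb0.le, mul_comm]
  have hne : ∀ m n : ℕ, 0 < m → 0 < n → (a:ℝ) ^ m ≠ (b:ℝ) ^ n := by
    intro m n hm hn h
    exact hindep m n hm hn (by exact_mod_cast h)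
  clear_value α la lb
  -- the subgroup generated by α and 1 is dense
  set S := AddSubgroup.closure ({α, 1} : Set ℝ) with hSdef
  have hαS : α ∈ S := AddSubgroup.subset_closure (by simp)
  have h1S : (1:ℝ) ∈ S := AddSubgroup.subset_closure (by simp)
  have hdense : Dense (S : Set ℝ) := by
    rcases S.dense_or_cyclic with h | ⟨g, hg⟩
    · exact h
    · exfalso
      rw [hg, AddSubgroup.mem_closure_singleton] at hαS h1S
      obtain ⟨k, hk⟩ := hαS
      obtain ⟨l, hl⟩ := h1S
      rw [zsmul_eq_mul] at hk hl
      have hl0 : l ≠ 0 := by rintro rfl; simp at hl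
      have hlα : (l:ℝ) * α = k := by
        calc (l:ℝ) * α = (l:ℝ) * ((k:ℝ) * g) := by rw [hk]
        _ = (k:ℝ) * ((l:ℝ) * g) := by ring
        _ = k := by rw [hl, mul_one]
      have hk0 : k ≠ 0 := by
        rintro rfl
        have : (l:ℝ) * α = 0 := by rw [hlα]; norm_num
        rcases mul_eq_zero.1 this with h | h
        · exact hl0 (by exact_mod_cast h)
        · exact absurd h (ne_of_gt hα)
      have habs : (l.natAbs : ℝ) * α = (k.natAbs : ℝ) := by
        have h1 : |(l:ℝ)| * α = |(k:ℝ)| := by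
          rw [← abs_of_pos hα, ← abs_mul, hlα]
        simpa [Nat.cast_natAbs] using h1
      have hpq : (a:ℝ) ^ l.natAbs = (b:ℝ) ^ k.natAbs := by
        rw [apow, habs, Real.rpow_natCast]
      exact hne l.natAbs k.natAbs (Int.natAbs_pos.2 hl0) (Int.natAbs_pos.2 hk0) hpq
  -- pick ε and δ
  have hξ0 : (0:ℝ) < ξ := by exact_mod_cast hξ
  set ε : ℝ := 1 / (6 * ξ) with hεdef
  have hε0 : 0 < ε := by positivity
  have hε6 : ε ≤ 1 / 6 := by
    rw [hεdef]
    have hξ1 : (1:ℝ) ≤ ξ := by exact_mod_cast hξ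
    rw [div_le_div_iff₀ (by positivity) (by norm_num)]
    nlinarith
  have hξε : (ξ:ℝ) * ε = 1 / 6 := by
    rw [hεdef]; field_simp
  clear_value ε
  set δ : ℝ := min 1 (min α (Real.log (1 + ε) / lb)) with hδdef
  have hδ0 : 0 < δ :=
    lt_min one_pos (lt_min hα (div_pos (Real.log_pos (by linarith)) hlb))
  have hδ1 : δ ≤ 1 := min_le_left _ _
  have hδα : δ ≤ α := le_trans (min_le_right _ _) (min_le_left _ _)
  have hδlog : δ ≤ Real.log (1 + ε) / lb := le_trans (min_le_right _ _) (min_le_right _ _)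
  clear_value δ
  -- main estimate, given m, n with m*α - n = ±x for x ∈ (0, δ)
  have key : ∀ (x : ℝ), 0 < x → x < δ → ∀ m n : ℕ, 0 < m → 0 < n →
      ((m:ℝ) * α - n = x ∨ (m:ℝ) * α - n = -x) →
      0 < (ξ : ℝ) * |(a : ℝ) ^ m - (b : ℝ) ^ n| ∧
      (ξ : ℝ) * |(a : ℝ) ^ m - (b : ℝ) ^ n| ≤ (b : ℝ) ^ n / 6 ∧
      5 / 6 * (b : ℝ) ^ n ≤ (a : ℝ) ^ m ∧ (a : ℝ) ^ m ≤ 7 / 6 * (b : ℝ) ^ n := by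
    intro x hx0 hxδ m n hm hn ht
    set t : ℝ := (m:ℝ) * α - n with htdef
    have htlt : t < δ := by rcases ht with h | h <;> rw [h] <;> linarith
    have htgt : -δ < t := by rcases ht with h | h <;> rw [h] <;> linarith
    have hmα : (m:ℝ) * α = (n:ℝ) + t := by rw [htdef]; ring
    clear_value t
    have hsplit : (a:ℝ) ^ m = (b:ℝ) ^ n * (b:ℝ) ^ (t:ℝ) := by
      rw [apow m, hmα, Real.rpow_add hb0, Real.rpow_natCast]
    have hbδ : (b:ℝ) ^ (δ:ℝ) ≤ 1 + ε := by
      rw [Real.rpow_def_of_pos hb0, ← hlb_def]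
      have h1 : lb * δ ≤ Real.log (1 + ε) := by
        rw [mul_comm]
        exact (le_div_iff₀ hlb).1 hδlog
      calc Real.exp (lb * δ) ≤ Real.exp (Real.log (1 + ε)) := Real.exp_le_exp.2 h1
        _ = 1 + ε := Real.exp_log (by linarith)
    have hbt_lt : (b:ℝ) ^ (t:ℝ) < 1 + ε :=
      lt_of_lt_of_le (Real.rpow_lt_rpow_left_iff hb1 |>.2 htlt) hbδ
    have hbt_gt : 1 - ε < (b:ℝ) ^ (t:ℝ) := by
      have h1 : (b:ℝ) ^ (-δ:ℝ) < (b:ℝ) ^ (t:ℝ) := (Real.rpow_lt_rpow_left_iff hb1).2 htgt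
      have h2 : (b:ℝ) ^ (-δ:ℝ) = ((b:ℝ) ^ (δ:ℝ))⁻¹ := by
        rw [Real.rpow_neg hb0.le]
      have h3 : (0:ℝ) < (b:ℝ) ^ (δ:ℝ) := Real.rpow_pos_of_pos hb0 _
      have h4 : (1 + ε)⁻¹ ≤ ((b:ℝ) ^ (δ:ℝ))⁻¹ := by
        apply inv_anti₀ h3 hbδ
      have h5 : 1 - ε ≤ (1 + ε)⁻¹ := by
        have hinv : (1 + ε) * (1 + ε)⁻¹ = 1 := mul_inv_cancel₀ (by linarith)
        nlinarith [sq_nonneg ε]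
      linarith [h2 ▸ h1]
    have hB0 : (0:ℝ) < (b:ℝ) ^ n := pow_pos hb0 n
    have hbtpos : (0:ℝ) < (b:ℝ) ^ (t:ℝ) := Real.rpow_pos_of_pos hb0 _
    have hup : (a:ℝ) ^ m ≤ (b:ℝ) ^ n * (1 + ε) := by
      rw [hsplit]; exact mul_le_mul_of_nonneg_left hbt_lt.le hB0.le
    have hlo : (b:ℝ) ^ n * (1 - ε) ≤ (a:ℝ) ^ m := by
      rw [hsplit]; exact mul_le_mul_of_nonneg_left hbt_gt.le hB0.le
    have hexp1 : (b:ℝ) ^ n * (1 + ε) = (b:ℝ) ^ n + ε * (b:ℝ) ^ n := by ring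
    have hexp2 : (b:ℝ) ^ n * (1 - ε) = (b:ℝ) ^ n - ε * (b:ℝ) ^ n := by ring
    have hεB : ε * (b:ℝ) ^ n ≤ 1 / 6 * (b:ℝ) ^ n :=
      mul_le_mul_of_nonneg_right hε6 hB0.le
    have habs : |(a:ℝ) ^ m - (b:ℝ) ^ n| ≤ ε * (b:ℝ) ^ n := by
      rw [abs_le]; constructor <;> linarith
    have hnz : (a:ℝ) ^ m - (b:ℝ) ^ n ≠ 0 := sub_ne_zero.2 (hne m n hm hn)
    have habs0 : 0 < |(a:ℝ) ^ m - (b:ℝ) ^ n| := abs_pos.2 hnz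
    refine ⟨mul_pos hξ0 habs0, ?_, by linarith, by linarith⟩
    calc (ξ:ℝ) * |(a:ℝ) ^ m - (b:ℝ) ^ n| ≤ (ξ:ℝ) * (ε * (b:ℝ) ^ n) :=
          mul_le_mul_of_nonneg_left habs hξ0.le
      _ = ((ξ:ℝ) * ε) * (b:ℝ) ^ n := by ring
      _ = (b:ℝ) ^ n / 6 := by rw [hξε]; ring
  -- find x ∈ S ∩ (0, δ)
  obtain ⟨x, hxS, hx0, hxδ⟩ : ∃ x, x ∈ S ∧ 0 < x ∧ x < δ := by
    have hne' : (Set.Ioo (0:ℝ) δ).Nonempty := Set.nonempty_Ioo.2 hδ0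
    obtain ⟨x, hxS, hx⟩ := hdense.exists_mem_open isOpen_Ioo hne'
    exact ⟨x, hxS, hx.1, hx.2⟩

  rw [hSdef, AddSubgroup.mem_closure_pair] at hxS
  obtain ⟨k, l, hkl⟩ := hxS
  rw [zsmul_eq_mul, zsmul_eq_mul, mul_one] at hkl
  have hk0 : k ≠ 0 := by
    rintro rfl
    rw [Int.cast_zero, zero_mul, zero_add] at hkl
    have h1 : (0:ℤ) < l := by exact_mod_cast hkl ▸ hx0
    have h2 : (l:ℝ) < 1 := by rw [hkl]; linarith
    have h3 : (1:ℝ) ≤ l := by exact_mod_cast h1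
    linarith
  rcases hk0.lt_or_gt with hkneg | hkpos
  · -- k < 0 : use m = -k, n = l
    have hk1 : (k:ℝ) ≤ -1 := by exact_mod_cast Int.le_sub_one_of_lt hkneg
    have hlpos : (0:ℝ) < l := by nlinarith
    have hl1 : (0:ℤ) < l := by exact_mod_cast hlpos
    refine ⟨(-k).toNat, l.toNat, ?_⟩
    have hm : (((-k).toNat : ℕ) : ℝ) = -(k:ℝ) := by
      have h := Int.toNat_of_nonneg (by omega : (0:ℤ) ≤ -k); exact_mod_cast h
    have hn : ((l.toNat : ℕ) : ℝ) = (l:ℝ) := by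
      have h := Int.toNat_of_nonneg hl1.le; exact_mod_cast h
    have hmpos : 0 < (-k).toNat := by omega
    have hnpos : 0 < l.toNat := by omega
    refine ⟨hmpos, hnpos, key x hx0 hxδ _ _ hmpos hnpos (Or.inr ?_)⟩
    rw [hm, hn]; linarith
  · -- k > 0 : use m = k, n = -l
    have hk1 : (1:ℝ) ≤ k := by exact_mod_cast hkpos
    have hlneg : (l:ℝ) < 0 := by nlinarith
    have hl1 : l < 0 := by exact_mod_cast hlneg
    refine ⟨k.toNat, (-l).toNat, ?_⟩
    have hm : ((k.toNat : ℕ) : ℝ) = (k:ℝ) := by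
      have h := Int.toNat_of_nonneg hkpos.le; exact_mod_cast h
    have hn : (((-l).toNat : ℕ) : ℝ) = -(l:ℝ) := by
      have h := Int.toNat_of_nonneg (by omega : (0:ℤ) ≤ -l); exact_mod_cast h
    have hmpos : 0 < k.toNat := by omega
    have hnpos : 0 < (-l).toNat := by omega
    refine ⟨hmpos, hnpos, key x hx0 hxδ _ _ hmpos hnpos (Or.inl ?_)⟩
    rw [hm, hn]; linarith
end
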